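/- Let T = U·V·P be a string over an alphabet Σ with |Σ| ≥ 3, such that P is non-empty, the only occurrences of P in T are as a prefix and as a suffix of V·P, 1 ≤ |V| < |P|, and |U| < |P|. Then there exists a string V' over Σ with d_H(V,V') = 1 such that P occurs exactly once in T' = U·V'·P. -/

import Mathlib

open Classical

/-- `p` is a period of the string (list) `P`. -/
def IsPeriodOf {α : Type*} (P : List α) (p : ℕ) : Prop :=
  0 < p ∧ ∀ i, i + p < P.length → P[i]? = P[i + p]?

/-- The smallest period of `P`. -/
noncomputable def minPeriod {α : Type*} (P : List α) : ℕ := sInf {p | IsPeriodOf P p}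

/-- `P` is periodic if its smallest period is at most `|P|/2`. -/
def ListPeriodic {α : Type*} (P : List α) : Prop := 2 * minPeriod P ≤ P.length

/-- `P` occurs in `S` starting at position `i`. -/
def OccursAt {α : Type*} (P S : List α) (i : ℕ) : Prop :=
  i + P.length ≤ S.length ∧ (S.drop i).take P.length = P

/-- The set of starting positions of occurrences of `P` in `S`. -/
noncomputable def occ {α : Type*} (P S : List α) : Finset ℕ :=
  (Finset.range (S.length + 1)).filter (fun i => OccursAt P S i)

/-- Hamming distance between two (equal-length) strings. -/
noncomputable def hamming {α : Type*} (S T : List α) : ℕ :=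
  ((List.range S.length).filter (fun i => S[i]? ≠ T[i]?)).length

/-- `P` is `(τ,k)`-resilient in `S`. -/
def Resilient {α : Type*} (P S : List α) (τ k : ℕ) : Prop :=
  ∀ S' : List α, S'.length = S.length → hamming S S' ≤ k → τ ≤ (occ P S').card

/-- The fragment `S[x..y]` (inclusive). -/
def frag {α : Type*} (S : List α) (x y : ℕ) : List α := (S.drop x).take (y - x + 1)

/-- The fragment `S[x..y]` is a run of `S`. -/
def IsRun {α : Type*} (S : List α) (x y : ℕ) : Prop :=
  x ≤ y ∧ y < S.length ∧ 2 * minPeriod (frag S x y) ≤ y - x + 1 ∧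
  (0 < x → ¬ IsPeriodOf (frag S (x - 1) y) (minPeriod (frag S x y))) ∧
  (y + 1 < S.length → ¬ IsPeriodOf (frag S x (y + 1)) (minPeriod (frag S x y)))

/-- Membership in `occ` in pointwise form. -/
lemma mem_occ_iff {α : Type*} {P S : List α} (hP : P ≠ []) {i : ℕ} :
    i ∈ occ P S ↔ (i + P.length ≤ S.length ∧ ∀ t, t < P.length → S[i + t]? = P[t]?) := by
  have hplen : 0 < P.length := List.length_pos_iff.mpr hP
  unfold occ
  rw [Finset.mem_filter, Finset.mem_range]
  unfold OccursAt
  constructor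
  · rintro ⟨h0, h1, h2⟩
    refine ⟨h1, fun t ht => ?_⟩
    conv_rhs => rw [← h2]
    rw [List.getElem?_take, if_pos ht, List.getElem?_drop]
  · rintro ⟨h1, h2⟩
    refine ⟨by omega, h1, ?_⟩
    apply List.ext_getElem?
    intro n
    rw [List.getElem?_take]
    by_cases hn : n < P.length
    · rw [if_pos hn, List.getElem?_drop, h2 n hn]
    · rw [if_neg hn, eq_comm]
      exact List.getElem?_eq_none (by omega)

lemma hamming_set_head {α : Type*} (V : List α) (c : α) (hV : V ≠ [])
    (hne : V[0]? ≠ some c) : hamming V (V.set 0 c) = 1 := by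
  obtain ⟨v0, Vt, rfl⟩ := List.exists_cons_of_ne_nil hV
  have hv0c : v0 ≠ c := by simpa using hne
  unfold hamming
  have hset : (v0 :: Vt).set 0 c = c :: Vt := rfl
  rw [hset, List.length_cons, List.range_succ_eq_map, List.filter_cons]
  have h0 : (decide ¬((v0 :: Vt)[0]? = (c :: Vt)[0]?)) = true := by
    simp [hv0c]
  rw [if_pos h0]
  have h1 : ((List.range Vt.length).map Nat.succ).filter
      (fun i => decide ¬((v0 :: Vt)[i]? = (c :: Vt)[i]?)) = [] := by
    rw [List.filter_map]
    have : (List.range Vt.length).filter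
        ((fun i => decide ¬((v0 :: Vt)[i]? = (c :: Vt)[i]?)) ∘ Nat.succ) = [] := by
      apply List.eq_nil_of_length_eq_zero
      rw [List.length_eq_zero_iff]
      apply List.filter_eq_nil_iff.mpr
      intro a _
      simp [Function.comp]
    rw [this, List.map_nil]
  rw [h1]
  rfl

theorem stmt7 {α : Type*} [Fintype α] (hcard : 3 ≤ Fintype.card α)
    (U V P : List α) (hP : P ≠ [])
    (hV1 : 1 ≤ V.length) (hVP : V.length < P.length) (hU : U.length < P.length)
    (hocc : occ P (U ++ V ++ P) = {U.length, U.length + V.length}) :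
    ∃ V' : List α, V'.length = V.length ∧ hamming V V' = 1 ∧
      (occ P (U ++ V' ++ P)).card = 1 := by
  classical
  set T := U ++ V ++ P with hT
  have hplen : 0 < P.length := List.length_pos_iff.mpr hP
  have hTlen : T.length = U.length + V.length + P.length := by
    rw [hT]; simp [List.length_append]; omega
  -- the two occurrences, pointwise
  have memu : U.length + P.length ≤ T.length ∧
      ∀ t, t < P.length → T[U.length + t]? = P[t]? := by
    rw [← mem_occ_iff hP, hocc]; simp
  have mems : (U.length + V.length) + P.length ≤ T.length ∧
      ∀ t, t < P.length → T[U.length + V.length + t]? = P[t]? := by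
    rw [← mem_occ_iff hP, hocc]; simp
  obtain ⟨-, occU⟩ := memu
  obtain ⟨-, occS⟩ := mems
  have honly : ∀ i, i + P.length ≤ T.length →
      (∀ t, t < P.length → T[i + t]? = P[t]?) → i = U.length ∨ i = U.length + V.length := by
    intro i h1 h2
    have : i ∈ occ P T := (mem_occ_iff hP).mpr ⟨h1, h2⟩
    rw [hocc] at this
    simpa using this
  have hTu : T[U.length]? = P[0]? := by simpa using occU 0 hplen
  -- P has period V.length
  have period : ∀ r, r + V.length < P.length → P[r]? = P[r + V.length]? := by
    intro r hr
    have h1 := occU (r + V.length) hr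
    have h2 := occS r (by omega)
    rw [show U.length + (r + V.length) = U.length + V.length + r by omega] at h1
    rw [← h2, ← h1]
  -- dangerous alignments
  set Valid : ℕ → Prop := fun i =>
    i < U.length ∧ (∀ x, x < P.length → i + x ≠ U.length → T[i + x]? = P[x]?) ∧
      T[U.length]? ≠ P[U.length - i]? with hValid
  have stepA : ∀ i, Valid i → i + P.length ≤ U.length + V.length := by
    intro i hi
    obtain ⟨hiu, hM, hne⟩ := hi
    by_contra hc
    push_neg at hc
    have h3 := hM (U.length + V.length - i) (by omega) (by omega)
    rw [show i + (U.length + V.length - i) = U.length + V.length + 0 by omega] at h3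
    have h4 := occS 0 (by omega)
    have h5 : P[U.length + V.length - i]? = P[0]? := by rw [← h3, h4]
    have h6 := period (U.length - i) (by omega)
    rw [show U.length - i + V.length = U.length + V.length - i by omega] at h6
    exact hne (hTu.trans (h5.symm.trans h6.symm))
  have L1 : ∀ i1 i2, Valid i1 → Valid i2 → i2 < i1 → False := by
    intro i1 i2 h1 h2 hlt
    have hA := stepA i1 h1
    obtain ⟨hi1u, hM1, hne1⟩ := h1
    obtain ⟨hi2u, hM2, hne2⟩ := h2
    have hB2a := hM1 (U.length - i2) (by omega) (by omega)
    rw [show i1 + (U.length - i2) = U.length + (i1 - i2) by omega] at hB2a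
    have hB2b := occU (i1 - i2) (by omega)
    have hB2 : P[i1 - i2]? = P[U.length - i2]? := by rw [← hB2a, hB2b]
    have hB3a := hM2 (i1 - i2) (by omega) (by omega)
    rw [show i2 + (i1 - i2) = i1 by omega] at hB3a
    have hB3b := hM1 0 (by omega) (by omega)
    rw [show i1 + 0 = i1 by omega] at hB3b
    have hB3 : P[0]? = P[i1 - i2]? := by rw [← hB3a, hB3b]
    exact hne2 (hTu.trans (hB3.trans hB2))
  -- choose the letter c
  set W : Option α := if h : ∃ i, Valid i then P[U.length - Classical.choose h]? else none
    with hW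
  obtain ⟨c, hc1, hc2⟩ : ∃ c : α, (some c : Option α) ≠ T[U.length]? ∧
      (some c : Option α) ≠ W := by
    obtain ⟨p0, hp0⟩ : ∃ a, P[0]? = some a := ⟨P[0], List.getElem?_eq_getElem hplen⟩
    obtain ⟨w, hwdef⟩ : ∃ w, W.getD p0 = w := ⟨_, rfl⟩
    obtain ⟨c, hc⟩ : ∃ c : α, c ∉ ({p0, w} : Finset α) := by
      by_contra hcc
      push_neg at hcc
      have h2 := Finset.card_le_card (fun c _ => hcc c : (Finset.univ : Finset α) ⊆ {p0, w})
      have h3 : ({p0, w} : Finset α).card ≤ 2 :=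
        (Finset.card_insert_le _ _).trans (by simp)
      rw [Finset.card_univ] at h2
      omega
    simp only [Finset.mem_insert, Finset.mem_singleton, not_or] at hc
    refine ⟨c, ?_, ?_⟩
    · rw [hTu, hp0]
      simpa using hc.1
    · cases hWc : W with
      | none => simp
      | some w' =>
        have : w' = w := by rw [hWc] at hwdef; simpa using hwdef
        simp [this, hc.2]
  have hcBad : ∀ i, Valid i → (some c : Option α) ≠ P[U.length - i]? := by
    intro i hi
    have hex : ∃ i, Valid i := ⟨i, hi⟩
    have hchoose : Classical.choose hex = i := by
      rcases lt_trichotomy (Classical.choose hex) i with h | h | h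
      · exact absurd h (fun h' => L1 i _ hi (Classical.choose_spec hex) h')
      · exact h
      · exact absurd h (fun h' => L1 _ i (Classical.choose_spec hex) hi h')
    have : W = P[U.length - i]? := by rw [hW, dif_pos hex, hchoose]
    rw [← this]; exact hc2
  -- the modified string
  set T' := U ++ V.set 0 c ++ P with hT'
  have hT'len : T'.length = T.length := by
    rw [hT, hT']; simp [List.length_append, List.length_set]
  have agree : ∀ x, x ≠ U.length → T'[x]? = T[x]? := by
    intro x hx
    rw [hT, hT']
    simp only [List.getElem?_append, List.getElem?_set, List.length_append,
      List.length_set]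
    split_ifs <;> first | rfl | omega
  have hT'u : T'[U.length]? = some c := by
    rw [hT']
    simp only [List.getElem?_append, List.getElem?_set, List.length_append,
      List.length_set]
    split_ifs <;> first | rfl | omega
  have hVne : V ≠ [] := by
    intro h; rw [h] at hV1; simp at hV1
  have hV0 : V[0]? ≠ some c := by
    have hTuV : T[U.length]? = V[0]? := by
      rw [hT]
      simp only [List.getElem?_append, List.length_append]
      split_ifs <;> first | omega | simp
    exact fun h => hc1 (by rw [hTuV, h])
  -- the occurrence set of T'
  have hoccT' : occ P T' = {U.length + V.length} := by
    apply Finset.ext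
    intro i
    rw [mem_occ_iff hP, Finset.mem_singleton]
    constructor
    · rintro ⟨hilen, hpt⟩
      rw [hT'len, hTlen] at hilen
      by_cases hwin : i ≤ U.length ∧ U.length < i + P.length
      · rcases Nat.lt_or_ge i U.length with hiu | hiu
        · -- i < U.length : dangerous alignment, contradiction
          exfalso
          have hval : Valid i := by
            refine ⟨hiu, ?_, ?_⟩
            · intro x hx hxu
              rw [← agree (i + x) hxu]
              exact hpt x hx
            · intro heq
              have hOT : i = U.length ∨ i = U.length + V.length := by
                refine honly i (by omega) (fun t ht => ?_)
                by_cases htu : i + t = U.length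
                · rw [htu, show t = U.length - i by omega]
                  exact heq
                · rw [← agree (i + t) htu]
                  exact hpt t ht
              omega
          have hcu := hpt (U.length - i) (by omega)
          rw [show i + (U.length - i) = U.length by omega, hT'u] at hcu
          exact hcBad i hval hcu
        · -- i = U.length : destroyed occurrence
          exfalso
          have hcu := hpt 0 hplen
          rw [show i + 0 = U.length by omega, hT'u] at hcu
          exact hc1 (hcu.trans hTu.symm)
      · -- window misses U.length
        push_neg at hwin
        have hmiss : ∀ t, t < P.length → i + t ≠ U.length := by
          intro t ht
          by_cases h : i ≤ U.length
          · have := hwin h; omega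
          · omega
        have hOT : i = U.length ∨ i = U.length + V.length := by
          refine honly i (by omega) (fun t ht => ?_)
          rw [← agree (i + t) (hmiss t ht)]
          exact hpt t ht
        rcases hOT with h | h
        · exfalso; exact hmiss 0 hplen (by omega)
        · exact h
    · intro hi
      subst hi
      constructor
      · rw [hT'len, hTlen]
      · intro t ht
        have hlen2 : (U ++ V.set 0 c).length = U.length + V.length := by
          simp [List.length_set]
        rw [hT', List.getElem?_append_right (by rw [hlen2]; omega), hlen2,
          show U.length + V.length + t - (U.length + V.length) = t by omega]
  refine ⟨V.set 0 c, by simp, hamming_set_head V c hVne hV0, ?_⟩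
  have : U ++ V.set 0 c ++ P = T' := by rw [hT']
  rw [this, hoccT', Finset.card_singleton]
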